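/- Under the same metric subregularity assumption on g(x,y) = f(x) − y at (x̄, f(x̄), 0) with respect to D × E, one has the equality T_U(D, x̄) ∩ ∇f(x̄)⁻¹(T_U(E, f(x̄))) = T_U(D ∩ f⁻¹(E), x̄). -/

import Mathlib

open Filter Topology Pointwise

section Defs

variable {X Y : Type*} [NormedAddCommGroup X] [NormedSpace ℝ X]
  [NormedAddCommGroup Y] [NormedSpace ℝ Y]

/-- A sequence of positive reals tending to zero. -/
def PosToZero (t : ℕ → ℝ) : Prop := (∀ n, 0 < t n) ∧ Tendsto t atTop (𝓝 0)

/-- First order Bouligand tangent cone. -/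
def TB (D : Set X) (x : X) : Set X :=
  {u | ∃ t : ℕ → ℝ, PosToZero t ∧ ∃ w : ℕ → X, Tendsto w atTop (𝓝 u) ∧
    ∀ n, x + t n • w n ∈ D}

/-- First order Ursescu tangent cone. -/
def TU (D : Set X) (x : X) : Set X :=
  {u | ∀ t : ℕ → ℝ, PosToZero t → ∃ w : ℕ → X, Tendsto w atTop (𝓝 u) ∧
    ∀ n, x + t n • w n ∈ D}

/-- Second order Bouligand tangent set. -/
def TB2 (D : Set X) (x x₁ : X) : Set X :=
  {u | ∃ t : ℕ → ℝ, PosToZero t ∧ ∃ w : ℕ → X, Tendsto w atTop (𝓝 u) ∧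
    ∀ n, x + t n • x₁ + (t n) ^ 2 • w n ∈ D}

/-- Second order Ursescu tangent set. -/
def TU2 (D : Set X) (x x₁ : X) : Set X :=
  {u | ∀ t : ℕ → ℝ, PosToZero t → ∃ w : ℕ → X, Tendsto w atTop (𝓝 u) ∧
    ∃ n₀ : ℕ, ∀ n ≥ n₀, x + t n • x₁ + (t n) ^ 2 • w n ∈ D}

/-- Graph of a set-valued map. -/
def SVGraph (F : X → Set Y) : Set (X × Y) := {p | p.2 ∈ F p.1}

/-- First order Bouligand derivative. -/
def DB (F : X → Set Y) (x : X) (y : Y) (u : X) : Set Y :=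
  {v | (u, v) ∈ TB (SVGraph F) (x, y)}

/-- First order Ursescu derivative. -/
def DU (F : X → Set Y) (x : X) (y : Y) (u : X) : Set Y :=
  {v | (u, v) ∈ TU (SVGraph F) (x, y)}

/-- Dini lower derivative. -/
def DD (F : X → Set Y) (x : X) (y : Y) (u : X) : Set Y :=
  {v | ∀ t : ℕ → ℝ, PosToZero t → ∀ w : ℕ → X, Tendsto w atTop (𝓝 u) →
    ∃ v' : ℕ → Y, Tendsto v' atTop (𝓝 v) ∧
      ∃ n₀ : ℕ, ∀ n ≥ n₀, y + t n • v' n ∈ F (x + t n • w n)}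

/-- Aubin property of a set-valued map around a point of its graph. -/
def AubinProperty (F : X → Set Y) (x : X) (y : Y) : Prop :=
  ∃ L > (0:ℝ), ∃ r > (0:ℝ), ∀ x' x'' : X, ‖x' - x‖ ≤ r → ‖x'' - x‖ ≤ r →
    ∀ y' ∈ F x', ‖y' - y‖ ≤ r → ∃ y'' ∈ F x'', ‖y' - y''‖ ≤ L * ‖x' - x''‖

end Defs

lemma diffquot_tendsto {X Y : Type*} [NormedAddCommGroup X] [NormedSpace ℝ X]
    [NormedAddCommGroup Y] [NormedSpace ℝ Y]
    {f : X → Y} {A : X →L[ℝ] Y} {xb : X} (hdf : HasFDerivAt f A xb)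
    {t : ℕ → ℝ} (htpos : ∀ n, 0 < t n) (htz : Tendsto t atTop (𝓝 0))
    {u : X} {w : ℕ → X} (hw : Tendsto w atTop (𝓝 u)) :
    Tendsto (fun n => (t n)⁻¹ • (f (xb + t n • w n) - f xb)) atTop (𝓝 (A u)) := by
  have hsm : Tendsto (fun n => t n • w n) atTop (𝓝 0) := by
    have := htz.smul hw
    rwa [zero_smul] at this
  have hx : Tendsto (fun n => xb + t n • w n) atTop (𝓝 xb) := by
    have h := ((tendsto_const_nhds : Tendsto (fun _ : ℕ => xb) atTop (𝓝 xb))).add hsm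
    rwa [add_zero] at h
  have hlo : (fun n => f (xb + t n • w n) - f xb - A (t n • w n)) =o[atTop]
      fun n => t n • w n := by
    have h := hdf.isLittleO.comp_tendsto hx
    exact h.congr (fun n => by simp [Function.comp, add_sub_cancel_left]) (fun n => by simp)
  have h1 : Tendsto (fun n => (t n)⁻¹ • (f (xb + t n • w n) - f xb - A (t n • w n)))
      atTop (𝓝 0) := by
    rw [NormedAddCommGroup.tendsto_nhds_zero]
    intro ε hε
    have hupos : (0:ℝ) < ‖u‖ + 1 := by positivity
    have hc : (0:ℝ) < ε / (2 * (‖u‖ + 1)) := by positivity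
    have hb : ∀ᶠ n in atTop, ‖w n‖ < ‖u‖ + 1 :=
      hw.norm.eventually_lt_const (lt_add_one _)
    have hll := (Asymptotics.isLittleO_iff.mp hlo) hc
    filter_upwards [hb, hll] with n hbn hlln
    have ht0 : t n ≠ 0 := (htpos n).ne'
    have h2 : ‖(t n)⁻¹ • (f (xb + t n • w n) - f xb - A (t n • w n))‖
        = (t n)⁻¹ * ‖f (xb + t n • w n) - f xb - A (t n • w n)‖ := by
      rw [norm_smul, Real.norm_eq_abs, abs_inv, abs_of_pos (htpos n)]
    have h3 : ‖t n • w n‖ = t n * ‖w n‖ := by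
      rw [norm_smul, Real.norm_eq_abs, abs_of_pos (htpos n)]
    rw [h2]
    calc (t n)⁻¹ * ‖f (xb + t n • w n) - f xb - A (t n • w n)‖
        ≤ (t n)⁻¹ * (ε / (2 * (‖u‖ + 1)) * (t n * ‖w n‖)) := by
          apply mul_le_mul_of_nonneg_left _ (inv_nonneg.mpr (htpos n).le)
          rw [← h3]; exact hlln
      _ = ε / (2 * (‖u‖ + 1)) * ‖w n‖ := by field_simp
      _ ≤ ε / (2 * (‖u‖ + 1)) * (‖u‖ + 1) := by
          exact mul_le_mul_of_nonneg_left hbn.le hc.le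
      _ = ε / 2 := by field_simp
      _ < ε := by linarith
  have h2 : Tendsto (fun n => A (w n)) atTop (𝓝 (A u)) := (A.continuous.tendsto u).comp hw
  have h3 := h1.add h2
  rw [zero_add] at h3
  refine h3.congr fun n => ?_
  have ht0 : t n ≠ 0 := (htpos n).ne'
  rw [smul_sub, A.map_smul, inv_smul_smul₀ ht0]
  abel

theorem tu_inter_subregular {X Y : Type*}
    [NormedAddCommGroup X] [NormedSpace ℝ X] [CompleteSpace X]
    [NormedAddCommGroup Y] [NormedSpace ℝ Y] [CompleteSpace Y]
    (D : Set X) (E : Set Y) (hD : IsClosed D) (hE : IsClosed E)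
    (f : X → Y) (hf : ContDiff ℝ 1 f) (xb : X) (hxb : xb ∈ D ∩ f ⁻¹' E)
    (hsub : ∃ s > (0:ℝ), ∃ μ > (0:ℝ), ∀ x ∈ D, ∀ y ∈ E,
      ‖x - xb‖ < s → ‖y - f xb‖ < s → ∀ ε > (0:ℝ),
        ∃ a ∈ D, ∃ b ∈ E, f a = b ∧ ‖x - a‖ + ‖y - b‖ < μ * ‖f x - y‖ + ε) :
    TU D xb ∩ (fderiv ℝ f xb) ⁻¹' (TU E (f xb)) = TU (D ∩ f ⁻¹' E) xb := by
  obtain ⟨s, hs, μ, hμ, hsub⟩ := hsub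
  have hdf : HasFDerivAt f (fderiv ℝ f xb) xb :=
    ((hf.differentiable one_ne_zero) xb).hasFDerivAt
  ext u
  simp only [Set.mem_inter_iff, Set.mem_preimage]
  constructor
  · rintro ⟨huD, huE⟩
    intro t ht
    obtain ⟨htpos, htz⟩ := ht
    obtain ⟨w, hw, hwD⟩ := huD t ⟨htpos, htz⟩
    obtain ⟨v, hv, hvE⟩ := huE t ⟨htpos, htz⟩
    have hq := diffquot_tendsto hdf htpos htz hw
    -- the normalized residual tends to 0
    have h0 : Tendsto (fun n => (t n)⁻¹ • (f (xb + t n • w n) - (f xb + t n • v n)))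
        atTop (𝓝 0) := by
      have h := hq.sub hv
      rw [sub_self] at h
      refine h.congr fun n => ?_
      have ht0 : t n ≠ 0 := (htpos n).ne'
      simp only [smul_sub, smul_add, inv_smul_smul₀ ht0]
      abel
    have hδ : Tendsto (fun n => (t n)⁻¹ * ‖f (xb + t n • w n) - (f xb + t n • v n)‖)
        atTop (𝓝 0) := by
      have h := h0.norm
      rw [norm_zero] at h
      refine h.congr fun n => ?_
      rw [norm_smul, Real.norm_eq_abs, abs_inv, abs_of_pos (htpos n)]
    have hx0 : Tendsto (fun n => ‖(xb + t n • w n) - xb‖) atTop (𝓝 0) := by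
      have h1 : Tendsto (fun n => t n • w n) atTop (𝓝 0) := by
        have := htz.smul hw; rwa [zero_smul] at this
      have := h1.norm
      rw [norm_zero] at this
      refine this.congr fun n => ?_
      congr 1; abel
    have hy0 : Tendsto (fun n => ‖(f xb + t n • v n) - f xb‖) atTop (𝓝 0) := by
      have h1 : Tendsto (fun n => t n • v n) atTop (𝓝 0) := by
        have := htz.smul hv; rwa [zero_smul] at this
      have := h1.norm
      rw [norm_zero] at this
      refine this.congr fun n => ?_
      congr 1; abel
    obtain ⟨n₀, hn₀⟩ := eventually_atTop.mp
      ((hx0.eventually_lt_const hs).and (hy0.eventually_lt_const hs))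
    have key : ∀ n, ∃ a, a ∈ D ∧ f a ∈ E ∧ (n₀ ≤ n →
        ‖(xb + t n • w n) - a‖
          ≤ μ * ‖f (xb + t n • w n) - (f xb + t n • v n)‖ + t n ^ 2) := by
      intro n
      by_cases hn : n₀ ≤ n
      · obtain ⟨h1, h2⟩ := hn₀ n hn
        obtain ⟨a, haD, b, hbE, hab, hlt⟩ :=
          hsub (xb + t n • w n) (hwD n) (f xb + t n • v n) (hvE n) h1 h2
            (t n ^ 2) (pow_pos (htpos n) 2)
        refine ⟨a, haD, hab ▸ hbE, fun _ => ?_⟩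
        exact ((le_add_of_nonneg_right (norm_nonneg _)).trans_lt hlt).le
      · exact ⟨xb, hxb.1, hxb.2, fun h => absurd h hn⟩
    choose a haD haE hab using key
    refine ⟨fun n => (t n)⁻¹ • (a n - xb), ?_, fun n => ?_⟩
    · have hdiff : Tendsto (fun n => (t n)⁻¹ • (a n - xb) - w n) atTop (𝓝 0) := by
        refine squeeze_zero_norm'
          (a := fun n => μ * ((t n)⁻¹ * ‖f (xb + t n • w n) - (f xb + t n • v n)‖) + t n)
          ?_ ?_
        · filter_upwards [eventually_atTop.mpr ⟨n₀, fun n hn => hab n hn⟩] with n hn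
          have ht0 : t n ≠ 0 := (htpos n).ne'
          have heq : (t n)⁻¹ • (a n - xb) - w n = (t n)⁻¹ • (a n - (xb + t n • w n)) := by
            simp only [smul_sub, smul_add, inv_smul_smul₀ ht0]; abel
          rw [heq, norm_smul, Real.norm_eq_abs, abs_inv, abs_of_pos (htpos n),
            norm_sub_rev]
          calc (t n)⁻¹ * ‖(xb + t n • w n) - a n‖
              ≤ (t n)⁻¹ * (μ * ‖f (xb + t n • w n) - (f xb + t n • v n)‖ + t n ^ 2) :=
                mul_le_mul_of_nonneg_left hn (inv_nonneg.mpr (htpos n).le)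
            _ = μ * ((t n)⁻¹ * ‖f (xb + t n • w n) - (f xb + t n • v n)‖) + t n := by
                field_simp
        · have := (hδ.const_mul μ).add htz
          simpa using this
      have h := hdiff.add hw
      rw [zero_add] at h
      refine h.congr fun n => ?_
      abel
    · have heq : xb + t n • (t n)⁻¹ • (a n - xb) = a n := by
        rw [smul_inv_smul₀ (htpos n).ne']; abel
      rw [heq]
      exact ⟨haD n, haE n⟩
  · intro hu
    refine ⟨fun t ht => ?_, fun t ht => ?_⟩
    · obtain ⟨w, hw, hmem⟩ := hu t ht
      exact ⟨w, hw, fun n => (hmem n).1⟩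
    · obtain ⟨w, hw, hmem⟩ := hu t ht
      refine ⟨fun n => (t n)⁻¹ • (f (xb + t n • w n) - f xb),
        diffquot_tendsto hdf ht.1 ht.2 hw, fun n => ?_⟩
      have heq : f xb + t n • (t n)⁻¹ • (f (xb + t n • w n) - f xb)
          = f (xb + t n • w n) := by
        rw [smul_inv_smul₀ (ht.1 n).ne']; abel
      rw [heq]
      exact (hmem n).2
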